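/- Let θ ∈ (0,1), ψ = θ/(2(1−θ)²), and let κ, σ_μ, σ_R > 0 be such that Δ_ψ := 4κ²(1 − 2ψ(σ_μ/(κσ_R))²) ≥ 0. Then for every T > 0 there exists a differentiable function A : [0,T] → ℝ with A(T) = 0 and A′(t) = −2σ_μ² A(t)² + 2κ A(t) − ψ/σ_R² for all t ∈ [0,T]; in particular this solution is bounded on [0,T]. -/

import Mathlib

set_option maxHeartbeats 1000000

/-- If `Δ_ψ ≥ 0`, the Riccati terminal value problem
`A'(t) = −2σ_μ²A(t)² + 2κA(t) − ψ/σ_R²`, `A(T) = 0` has a (bounded) solution on `[0,T]`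
for every horizon `T > 0`. -/
theorem stmt_11 (θ ψ κ σμ σR : ℝ) (hθ : θ ∈ Set.Ioo (0 : ℝ) 1)
    (hψ : ψ = θ / (2 * (1 - θ) ^ 2))
    (hκ : 0 < κ) (hσμ : 0 < σμ) (hσR : 0 < σR)
    (hΔ : 4 * κ ^ 2 * (1 - 2 * ψ * (σμ / (κ * σR)) ^ 2) ≥ 0) :
    ∀ T > (0 : ℝ), ∃ A : ℝ → ℝ,
      A T = 0 ∧
      (∀ t ∈ Set.Icc 0 T,
        HasDerivWithinAt A (-2 * σμ ^ 2 * A t ^ 2 + 2 * κ * A t - ψ / σR ^ 2)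
          (Set.Icc 0 T) t) ∧
      ∃ M : ℝ, ∀ t ∈ Set.Icc 0 T, |A t| ≤ M := by
  intro T hT
  have hθ0 := hθ.1
  have hθ1 := hθ.2
  set a : ℝ := 2 * σμ ^ 2 with ha
  set c : ℝ := ψ / σR ^ 2 with hc
  have hapos : 0 < a := by positivity
  have hψpos : 0 < ψ := by
    rw [hψ]
    have : (0:ℝ) < 1 - θ := by linarith
    positivity
  have hcpos : 0 < c := div_pos hψpos (by positivity)
  have hdisc : a * c ≤ κ ^ 2 := by
    rw [div_pow, ge_iff_le] at hΔ
    have h2 : (0:ℝ) < (κ * σR) ^ 2 := by positivity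
    have hX : 2 * ψ * (σμ ^ 2 / (κ * σR) ^ 2) ≤ 1 := by nlinarith [hΔ]
    have h4 : 2 * ψ * (σμ ^ 2 / (κ * σR) ^ 2) * (κ * σR) ^ 2 = 2 * ψ * σμ ^ 2 := by
      field_simp
    have hX' : 2 * ψ * σμ ^ 2 ≤ (κ * σR) ^ 2 := by nlinarith [hX, h2]
    rw [hc, ha, mul_div_assoc', div_le_iff₀ (by positivity : (0:ℝ) < σR ^ 2)]
    nlinarith [hX']
  set lam : ℝ := Real.sqrt (κ ^ 2 - a * c) with hlamdef
  have hlam2 : lam ^ 2 = κ ^ 2 - a * c := Real.sq_sqrt (by linarith)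
  have hlamnn : 0 ≤ lam := Real.sqrt_nonneg _
  have hlamle : lam ≤ κ := by nlinarith
  rcases eq_or_lt_of_le hlamnn with h0 | hlampos
  · -- double root case: κ² = a c
    have hκ2 : κ ^ 2 = a * c := by nlinarith
    have hceq : c = κ ^ 2 / a := by
      rw [eq_div_iff (ne_of_gt hapos)]
      linarith [hκ2]
    refine ⟨fun t => κ / a - (κ / a) / (1 + κ * (T - t)), ?_, ?_, ?_⟩
    · simp
    · intro t ht
      have hd : (0:ℝ) < 1 + κ * (T - t) := by
        have : 0 ≤ T - t := by linarith [ht.2]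
        nlinarith
      have hd' : (1 + κ * (T - t)) ≠ 0 := ne_of_gt hd
      have hden : HasDerivAt (fun t : ℝ => 1 + κ * (T - t)) (-κ) t := by
        have : HasDerivAt (fun t : ℝ => T - t) (-1) t := by
          simpa using (hasDerivAt_id t).const_sub T
        simpa using (this.const_mul κ).const_add 1
      have hA := ((hasDerivAt_const t (κ / a)).div hden hd').const_sub (κ / a)
      refine (hA.congr_deriv ?_).hasDerivWithinAt
      rw [hceq, ha]
      have hσμ' : σμ ≠ 0 := ne_of_gt hσμ
      field_simp
      ring
    · refine ⟨2 * (κ / a), fun t ht => ?_⟩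
      have hTt : 0 ≤ T - t := by linarith [ht.2]
      have hd : (0:ℝ) < 1 + κ * (T - t) := by nlinarith
      have h1 : 0 < κ / a := by positivity
      have hκT : 0 ≤ κ * (T - t) := mul_nonneg hκ.le hTt
      have h2 : (κ / a) / (1 + κ * (T - t)) ≤ κ / a := by
        rw [div_le_iff₀ hd]
        nlinarith [mul_nonneg h1.le hκT]
      have h3 : 0 < (κ / a) / (1 + κ * (T - t)) := by positivity
      rw [abs_le]
      constructor <;> nlinarith
  · -- two distinct roots
    set s : ℝ → ℝ := fun t => Real.exp (2 * lam * (t - T)) with hs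
    set D : ℝ → ℝ := fun t => (κ + lam) - (κ - lam) * s t with hD
    have hspos : ∀ t, 0 < s t := fun t => Real.exp_pos _
    have hsle : ∀ t ≤ T, s t ≤ 1 := by
      intro t htT
      rw [hs]
      simp only
      rw [show (1:ℝ) = Real.exp 0 by simp]
      apply Real.exp_le_exp.mpr
      nlinarith
    have hDpos : ∀ t ≤ T, 0 < D t := by
      intro t htT
      have h1 : (κ - lam) * s t ≤ (κ - lam) * 1 :=
        mul_le_mul_of_nonneg_left (hsle t htT) (by linarith)
      simp only [hD]
      nlinarith
    have haeq : (2:ℝ) * σμ ^ 2 = (κ ^ 2 - lam ^ 2) / c := by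
      rw [eq_div_iff (ne_of_gt hcpos), ← ha]
      linarith [hlam2]
    refine ⟨fun t => c * (1 - s t) / D t, ?_, ?_, ?_⟩
    · simp [hs, hD]
    · intro t ht
      have htT := ht.2
      have hDt : D t ≠ 0 := ne_of_gt (hDpos t htT)
      have hsD : HasDerivAt s (s t * (2 * lam)) t := by
        have hi : HasDerivAt (fun t : ℝ => 2 * lam * (t - T)) (2 * lam) t := by
          simpa using ((hasDerivAt_id t).sub_const T).const_mul (2 * lam)
        simpa [hs] using hi.exp
      have hN : HasDerivAt (fun t => c * (1 - s t)) (c * (0 - s t * (2 * lam))) t :=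
        ((hasDerivAt_const t (1:ℝ)).sub hsD).const_mul c
      have hDd : HasDerivAt D (0 - (κ - lam) * (s t * (2 * lam))) t :=
        (hasDerivAt_const t (κ + lam)).sub (hsD.const_mul (κ - lam))
      have hA := hN.div hDd hDt
      refine (hA.congr_deriv ?_).hasDerivWithinAt
      rw [show (-2 : ℝ) * σμ ^ 2 = -((κ ^ 2 - lam ^ 2) / c) by rw [← haeq]; ring]
      have hDt' : D t ≠ 0 := hDt
      simp only [hD] at hDt' ⊢
      field_simp
      have hD2 : (κ + lam - s t * (κ - lam)) ^ 2 ≠ 0 := pow_ne_zero 2 (by rwa [mul_comm] at hDt')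
      rw [div_sub_one hD2, div_left_inj' hD2]
      ring
    · refine ⟨c / (2 * lam), fun t ht => ?_⟩
      have htT := ht.2
      have hDt := hDpos t htT
      have hs1 := hsle t htT
      have hsp := hspos t
      have hN0 : 0 ≤ c * (1 - s t) := by nlinarith
      have hAnn : 0 ≤ c * (1 - s t) / D t := div_nonneg hN0 (le_of_lt hDt)
      rw [abs_of_nonneg hAnn, div_le_div_iff₀ hDt (by positivity)]
      simp only [hD]
      nlinarith [mul_nonneg hcpos.le (mul_nonneg (by linarith : (0:ℝ) ≤ κ - lam) (by linarith : (0:ℝ) ≤ 1 - s t)),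
        mul_nonneg hcpos.le (mul_nonneg (by linarith : (0:ℝ) ≤ 2 * lam) hsp.le)]
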